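/- Let (A,B) be a strict nondegenerate HIN pair (i.e., (A,B) is a HIN pair with A_{i+1,i} > 0 for all 1 ≤ i < n and 0 < B_{1,1} < 1), and let (Ã,B̃) be a strict HIN pair that is orthogonally equivalent to (A,B) via an orthogonal matrix T (Ã = TᵀAT, B̃ = TᵀB). Then Ã = A and B̃ = B. -/

import Mathlib

open Matrix

/-- `(A,B)` is in Hessenberg form: `A` is upper Hessenberg, `B 0 0 ≥ 0`, and the rest of the
first column of `B` vanishes. -/
def IsHessenbergPair {n d : ℕ} [NeZero n] [NeZero d] (A : Matrix (Fin n) (Fin n) ℝ)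
    (B : Matrix (Fin n) (Fin d) ℝ) : Prop :=
  (∀ i j : Fin n, (j : ℕ) + 1 < (i : ℕ) → A i j = 0) ∧
  0 ≤ B 0 0 ∧
  ∀ j : Fin n, j ≠ 0 → B j 0 = 0

/-- `(A,B)` is input normal: `A Aᵀ + B Bᵀ = I`. -/
def InputNormal {n d : ℕ} (A : Matrix (Fin n) (Fin n) ℝ)
    (B : Matrix (Fin n) (Fin d) ℝ) : Prop :=
  A * Aᵀ + B * Bᵀ = 1

/-- A Hessenberg pair is strict if it is unreduced (`A_{i+1,i} ≠ 0`, `B 0 0 ≠ 0`) and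
standard (`A_{i+1,i} ≥ 0`, `0 ≤ B 0 0 ≤ 1`); equivalently `A_{i+1,i} > 0` on the whole
subdiagonal and `0 < B 0 0 ≤ 1`. -/
def StrictPair {n d : ℕ} [NeZero n] [NeZero d] (A : Matrix (Fin n) (Fin n) ℝ)
    (B : Matrix (Fin n) (Fin d) ℝ) : Prop :=
  (∀ i j : Fin n, (i : ℕ) = (j : ℕ) + 1 → 0 < A i j) ∧ 0 < B 0 0 ∧ B 0 0 ≤ 1

/-- Uniqueness of strict HIN pairs in an orthogonal equivalence class: if `(A,B)` is a strict
nondegenerate HIN pair and `(A',B') = (Tᵀ A T, Tᵀ B)` is a strict HIN pair orthogonally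
equivalent to it, then `A' = A` and `B' = B`. -/
theorem strict_HIN_unique (n d : ℕ) [NeZero n] [NeZero d]
    (A A' : Matrix (Fin n) (Fin n) ℝ) (B B' : Matrix (Fin n) (Fin d) ℝ)
    (hHess : IsHessenbergPair A B) (hIN : InputNormal A B)
    (hStrict : StrictPair A B) (hNdg : B 0 0 < 1)
    (hHess' : IsHessenbergPair A' B') (hIN' : InputNormal A' B')
    (hStrict' : StrictPair A' B')
    (T : Matrix (Fin n) (Fin n) ℝ) (hT : Tᵀ * T = 1)
    (hA' : A' = Tᵀ * A * T) (hB' : B' = Tᵀ * B) :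
    A' = A ∧ B' = B := by
  -- Both orthogonality identities
  have hTT : T * Tᵀ = 1 := mul_eq_one_comm.mp hT
  -- Row and column norms
  have hrow : ∀ i : Fin n, (∑ j, T i j * T i j) = 1 := by
    intro i
    have h := congrFun (congrFun hTT i) i
    simpa [Matrix.mul_apply, Matrix.transpose_apply, Matrix.one_apply] using h
  have hcol : ∀ j : Fin n, (∑ i, T i j * T i j) = 1 := by
    intro j
    have h := congrFun (congrFun hT j) j
    simpa [Matrix.mul_apply, Matrix.transpose_apply, Matrix.one_apply] using h
  -- helper: a unit vector with a 1 entry vanishes elsewhere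
  have unit : ∀ (x : Fin n → ℝ) (j0 : Fin n), (∑ j, x j * x j) = 1 → x j0 = 1 →
      ∀ j, j ≠ j0 → x j = 0 := by
    intro x j0 hsum h1 j hj
    have hadd : x j0 * x j0 + ∑ j' ∈ Finset.univ.erase j0, x j' * x j' = ∑ j, x j * x j :=
      Finset.add_sum_erase Finset.univ (fun j' => x j' * x j') (Finset.mem_univ j0)
    rw [hsum, h1] at hadd
    have hsplit : (∑ j' ∈ Finset.univ.erase j0, x j' * x j') = 0 := by linarith
    have hz := (Finset.sum_eq_zero_iff_of_nonneg
      (fun i _ => mul_self_nonneg (x i))).mp hsplit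
    exact mul_self_eq_zero.mp (hz j (Finset.mem_erase.mpr ⟨hj, Finset.mem_univ j⟩))
  -- helper: unit vector supported on one coordinate has square-1 there
  have diag : ∀ (x : Fin n → ℝ) (j0 : Fin n), (∑ j, x j * x j) = 1 →
      (∀ j, j ≠ j0 → x j = 0) → x j0 * x j0 = 1 := by
    intro x j0 hsum hz
    rw [← hsum]
    exact (Finset.sum_eq_single (f := fun j => x j * x j) j0
      (fun b _ hb => by show x b * x b = 0; rw [hz b hb, mul_zero])
      (fun h => absurd (Finset.mem_univ j0) h)).symm
  -- helper: from a column identity, deduce the corresponding row identity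
  have rowOf : ∀ c : Fin n, (∀ i, T i c = if i = c then 1 else 0) →
      ∀ j, T c j = if j = c then 1 else 0 := by
    intro c hc j
    have h1 : T c c = 1 := by simpa using hc c
    by_cases hj : j = c
    · simp [hj, h1]
    · rw [if_neg hj]
      exact unit (fun j => T c j) c (hrow c) h1 j hj
  -- main induction: every column of T is the corresponding standard basis vector
  have key : ∀ k : ℕ, ∀ hk : k < n, ∀ i : Fin n,
      T i ⟨k, hk⟩ = if i = ⟨k, hk⟩ then 1 else 0 := by
    intro k
    induction k using Nat.strong_induction_on with
    | _ k ih =>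
      rcases k with _ | m
      · -- base case k = 0
        intro hk i
        have h0 : (⟨0, hk⟩ : Fin n) = 0 := by ext; simp
        rw [h0]
        -- entries of the first column of B'
        have hBent : ∀ j : Fin n, B' j 0 = T 0 j * B 0 0 := by
          intro j
          rw [hB', Matrix.mul_apply]
          simp only [Matrix.transpose_apply]
          exact Finset.sum_eq_single (0 : Fin n)
            (fun b _ hb => by rw [hHess.2.2 b hb, mul_zero])
            (fun h => absurd (Finset.mem_univ (0 : Fin n)) h)
        have hrow0 : ∀ j : Fin n, j ≠ 0 → T 0 j = 0 := by
          intro j hj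
          have h := hHess'.2.2 j hj
          rw [hBent j] at h
          rcases mul_eq_zero.mp h with h | h
          · exact h
          · exact absurd h hStrict.2.1.ne'
        have hsq := diag (fun j => T 0 j) 0 (hrow 0) hrow0
        have hdiag0 : T 0 0 = 1 := by
          have hBpos : 0 < B' 0 0 := hStrict'.2.1
          rw [hBent 0] at hBpos
          rcases mul_self_eq_one_iff.mp hsq with h | h
          · exact h
          · exfalso
            have h' : T 0 0 = -1 := h
            rw [h'] at hBpos
            nlinarith [hStrict.2.1]
        by_cases hi : i = 0
        · simp [hi, hdiag0]
        · rw [if_neg hi]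
          exact unit (fun i => T i 0) 0 (hcol 0) hdiag0 i hi
      · -- inductive step k = m + 1
        intro hk i
        have hmn : m < n := Nat.lt_of_succ_lt hk
        set km : Fin n := ⟨m, hmn⟩ with hkm
        set k1 : Fin n := ⟨m + 1, hk⟩ with hk1
        have hcolprev : ∀ c : Fin n, (c : ℕ) ≤ m → ∀ i : Fin n,
            T i c = if i = c then 1 else 0 := by
          intro c hc i
          have h := ih c.val (by omega) c.isLt i
          simpa using h
        have hrowprev : ∀ c : Fin n, (c : ℕ) ≤ m → ∀ j : Fin n,
            T c j = if j = c then 1 else 0 :=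
          fun c hc => rowOf c (hcolprev c hc)
        have hTkmkm : T km km = 1 := by simpa using hcolprev km le_rfl km
        -- entries of column km of A'
        have hA'entry : ∀ j : Fin n, A' j km = ∑ i, T i j * A i km := by
          intro j
          have h1 : (Tᵀ * A * T) j km = (Tᵀ * A) j km := by
            rw [Matrix.mul_apply]
            rw [Finset.sum_eq_single km (fun b _ hb => by
                have hz : T b km = 0 := by
                  have h := hcolprev km le_rfl b
                  rwa [if_neg hb] at h
                rw [hz, mul_zero])
              (fun h => absurd (Finset.mem_univ km) h)]
            rw [hTkmkm, mul_one]
          rw [hA', h1, Matrix.mul_apply]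
          simp only [Matrix.transpose_apply]
        have hTA : ∀ j : Fin n, m < (j : ℕ) →
            (∑ i, T i j * A i km) = T k1 j * A k1 km := by
          intro j hj
          apply Finset.sum_eq_single
          · intro b _ hb
            rcases lt_or_ge (m : ℕ) (b : ℕ) with hbm | hbm
            · have hbgt : (km : ℕ) + 1 < (b : ℕ) := by
                have hne : (b : ℕ) ≠ m + 1 := fun h => hb (Fin.ext h)
                simp only [hkm]
                omega
              rw [hHess.1 b km hbgt, mul_zero]
            · have hz : T b j = 0 := by
                have h := hrowprev b hbm j
                rw [if_neg (fun h' => by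
                  rw [h'] at hj; omega)] at h
                exact h
              rw [hz, zero_mul]
          · intro h; exact absurd (Finset.mem_univ k1) h
        have hApos : 0 < A k1 km := hStrict.1 k1 km rfl
        have hrowk1 : ∀ j : Fin n, j ≠ k1 → T k1 j = 0 := by
          intro j hj
          rcases le_or_gt (j : ℕ) m with hjm | hjm
          · have h := hcolprev j hjm k1
            rw [if_neg (fun h' => hj h'.symm)] at h
            exact h
          · have hjgt : (km : ℕ) + 1 < (j : ℕ) := by
              have hne : (j : ℕ) ≠ m + 1 := fun h => hj (Fin.ext h)
              simp only [hkm]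
              omega
            have hA'0 : A' j km = 0 := hHess'.1 j km hjgt
            rw [hA'entry j, hTA j hjm] at hA'0
            rcases mul_eq_zero.mp hA'0 with h | h
            · exact h
            · exact absurd h hApos.ne'
        have hsq := diag (fun j => T k1 j) k1 (hrow k1) hrowk1
        have hdiagk1 : T k1 k1 = 1 := by
          have hA'pos : 0 < A' k1 km := hStrict'.1 k1 km rfl
          rw [hA'entry k1, hTA k1 (by simp [hk1])] at hA'pos
          rcases mul_self_eq_one_iff.mp hsq with h | h
          · exact h
          · exfalso
            have h' : T k1 k1 = -1 := h
            rw [h'] at hA'pos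
            nlinarith
        by_cases hi : i = k1
        · simp [hi, hdiagk1]
        · rw [if_neg hi]
          exact unit (fun i => T i k1) k1 (hcol k1) hdiagk1 i hi
  have hTeq : T = 1 := by
    ext i j
    have h := key j.val j.isLt i
    simpa [Matrix.one_apply] using h
  subst hA' hB'
  rw [hTeq]
  constructor <;> simp
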